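/- The antiautomorphism θ of the free algebra F_n defined on generators by θ(z_{A,i}) = z_{({1,...,n}∖A)∖{i}, i} preserves the defining ideal J_n of Q_n, and hence induces an antiautomorphism of Q_n. -/
import Mathlib


namespace QnPaper

/-- The defining relations of the quadratic algebra `Q_n`:
for `A ⊆ {1,…,n}` and distinct `i, j ∉ A`,
`z_{A∪{i},j} + z_{A,i} = z_{A∪{j},i} + z_{A,j}` and
`z_{A∪{i},j} * z_{A,i} = z_{A∪{j},i} * z_{A,j}`. -/
inductive QRel (k : Type) [Field k] (n : ℕ) :
    FreeAlgebra k (Finset (Fin n) × Fin n) → FreeAlgebra k (Finset (Fin n) × Fin n) → Prop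
  | add_rel (A : Finset (Fin n)) (i j : Fin n) (hi : i ∉ A) (hj : j ∉ A) (hij : i ≠ j) :
      QRel k n (FreeAlgebra.ι k (insert i A, j) + FreeAlgebra.ι k (A, i))
        (FreeAlgebra.ι k (insert j A, i) + FreeAlgebra.ι k (A, j))
  | mul_rel (A : Finset (Fin n)) (i j : Fin n) (hi : i ∉ A) (hj : j ∉ A) (hij : i ≠ j) :
      QRel k n (FreeAlgebra.ι k (insert i A, j) * FreeAlgebra.ι k (A, i))
        (FreeAlgebra.ι k (insert j A, i) * FreeAlgebra.ι k (A, j))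

/-- The quadratic algebra `Q_n`. -/
abbrev Q (k : Type) [Field k] (n : ℕ) := RingQuot (QRel k n)

/-- The generator `z_{A,i}` of `Q_n` (only meaningful when `i ∉ A`). -/
def z (k : Type) [Field k] (n : ℕ) (A : Finset (Fin n)) (i : Fin n) : Q k n :=
  RingQuot.mkAlgHom k (QRel k n) (FreeAlgebra.ι k (A, i))

/-- The index map on generators: `(A,i) ↦ (({1,…,n}∖A)∖{i}, i)` when `i ∉ A`,
identity otherwise. -/
def gmap (n : ℕ) (p : Finset (Fin n) × Fin n) : Finset (Fin n) × Fin n :=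
  if p.2 ∈ p.1 then p else ((Finset.univ \ p.1).erase p.2, p.2)

lemma gmap_gmap (n : ℕ) (p : Finset (Fin n) × Fin n) : gmap n (gmap n p) = p := by
  unfold gmap
  by_cases h : p.2 ∈ p.1
  · simp [h]
  · have h2 : p.2 ∉ (Finset.univ \ p.1).erase p.2 := Finset.notMem_erase _ _
    rw [if_neg h, if_neg h2]
    ext x
    · simp only [Finset.mem_erase, Finset.mem_sdiff, Finset.mem_univ, true_and]
      constructor
      · rintro ⟨hx, hx2⟩
        by_contra hxp
        exact hx2 ⟨hx, hxp⟩
      · intro hx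
        exact ⟨fun he => h (he ▸ hx), fun hc => hc.2 hx⟩
    · rfl

lemma gmap_of_notMem {n : ℕ} {A : Finset (Fin n)} {i : Fin n} (h : i ∉ A) :
    gmap n (A, i) = ((Finset.univ \ A).erase i, i) := by
  simp [gmap, h]

section

variable (k : Type) [Field k] (n : ℕ)

/-- The candidate antiautomorphism on the free algebra, landing in the opposite of `Q`. -/
noncomputable def F0 : FreeAlgebra k (Finset (Fin n) × Fin n) →ₐ[k] (Q k n)ᵐᵒᵖ :=
  FreeAlgebra.lift k fun p =>
    MulOpposite.op (RingQuot.mkAlgHom k (QRel k n) (FreeAlgebra.ι k (gmap n p)))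

lemma F0_ι (p : Finset (Fin n) × Fin n) :
    F0 k n (FreeAlgebra.ι k p)
      = MulOpposite.op (RingQuot.mkAlgHom k (QRel k n) (FreeAlgebra.ι k (gmap n p))) := by
  simp [F0]

/-- The set-theoretic identities needed: given `i ∉ A`, `j ∉ A`, `i ≠ j`, with
`C := ((univ∖A)∖{i})∖{j}`, the images of the four generators appearing in the
relations are `(C,j)`, `(insert j C, i)`, `(C,i)`, `(insert i C, j)`. -/
lemma gmap_insert {n : ℕ} {A : Finset (Fin n)} {i j : Fin n}
    (hi : i ∉ A) (hj : j ∉ A) (hij : i ≠ j) :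
    gmap n (insert i A, j) = (((Finset.univ \ A).erase i).erase j, j) ∧
    gmap n (A, i) = (insert j (((Finset.univ \ A).erase i).erase j), i) := by
  have hjmem : j ∈ (Finset.univ \ A).erase i := by
    simp [Finset.mem_erase, hj, hij.symm]
  constructor
  · rw [gmap_of_notMem (by simp [hij.symm, hj])]
    have : Finset.univ \ insert i A = (Finset.univ \ A).erase i := by
      rw [Finset.sdiff_insert]
    rw [this]
  · rw [gmap_of_notMem hi, Finset.insert_erase hjmem]

lemma F0_rel : ∀ ⦃x y : FreeAlgebra k (Finset (Fin n) × Fin n)⦄,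
    QRel k n x y → F0 k n x = F0 k n y := by
  intro x y h
  induction h with
  | add_rel A i j hi hj hij =>
    obtain ⟨e1, e2⟩ := gmap_insert hi hj hij
    obtain ⟨e3, e4⟩ := gmap_insert hj hi hij.symm
    rw [Finset.erase_right_comm (a := j) (b := i)] at e3 e4
    set C := ((Finset.univ \ A).erase i).erase j with hC
    have hiC : i ∉ C := by simp [hC, Finset.mem_erase]
    have hjC : j ∉ C := Finset.notMem_erase _ _
    have key := RingQuot.mkAlgHom_rel k (QRel.add_rel (k := k) C i j hiC hjC hij)
    simp only [map_add] at key
    simp only [map_add, F0_ι, e1, e2, e3, e4, ← MulOpposite.op_add]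
    congr 1
    exact (add_comm _ _).trans (key.symm.trans (add_comm _ _))
  | mul_rel A i j hi hj hij =>
    obtain ⟨e1, e2⟩ := gmap_insert hi hj hij
    obtain ⟨e3, e4⟩ := gmap_insert hj hi hij.symm
    rw [Finset.erase_right_comm (a := j) (b := i)] at e3 e4
    set C := ((Finset.univ \ A).erase i).erase j with hC
    have hiC : i ∉ C := by simp [hC, Finset.mem_erase]
    have hjC : j ∉ C := Finset.notMem_erase _ _
    have key := RingQuot.mkAlgHom_rel k (QRel.mul_rel (k := k) C j i hjC hiC hij.symm)
    simp only [map_mul] at key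
    simp only [map_mul, F0_ι, e1, e2, e3, e4, ← MulOpposite.op_mul]
    exact congrArg MulOpposite.op key

/-- The induced antihomomorphism `Q → Qᵐᵒᵖ`. -/
noncomputable def Φ : Q k n →ₐ[k] (Q k n)ᵐᵒᵖ :=
  RingQuot.liftAlgHom k ⟨F0 k n, F0_rel k n⟩

lemma Φ_gen (p : Finset (Fin n) × Fin n) :
    Φ k n (RingQuot.mkAlgHom k (QRel k n) (FreeAlgebra.ι k p))
      = MulOpposite.op (RingQuot.mkAlgHom k (QRel k n) (FreeAlgebra.ι k (gmap n p))) := by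
  rw [Φ, RingQuot.liftAlgHom_mkAlgHom_apply, F0_ι]

lemma Φ_Φ (x : Q k n) : Φ k n ((Φ k n x).unop) = MulOpposite.op x := by
  obtain ⟨y, rfl⟩ := RingQuot.mkAlgHom_surjective k (QRel k n) x
  induction y using FreeAlgebra.induction with
  | grade0 r =>
    simp only [AlgHom.commutes]
    simp
  | grade1 p =>
    rw [Φ_gen, MulOpposite.unop_op, Φ_gen, gmap_gmap]
  | mul a b ha hb =>
    simp only [map_mul, MulOpposite.unop_mul, ha, hb, ← MulOpposite.op_mul]
  | add a b ha hb =>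
    simp only [map_add, MulOpposite.unop_add, ha, hb, ← MulOpposite.op_add]

end

/-- The map sending the generator indexed by `(A, i)` to the one indexed by
`(({1,…,n} ∖ A) ∖ {i}, i)` induces an antiautomorphism of `Q n`. -/
theorem stmt2 (k : Type) [Field k] (n : ℕ) :
    ∃ θ : Q k n ≃ₗ[k] Q k n,
      (∀ a b : Q k n, θ (a * b) = θ b * θ a) ∧
      θ 1 = 1 ∧
      ∀ (A : Finset (Fin n)) (i : Fin n), i ∉ A →
        θ (z k n A i) = z k n ((Finset.univ \ A).erase i) i := by
  classical
  refine ⟨{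
      toFun := fun x => (Φ k n x).unop
      map_add' := fun a b => by simp
      map_smul' := fun c a => by simp
      invFun := fun x => (Φ k n x).unop
      left_inv := fun x => by
        show (Φ k n ((Φ k n x).unop)).unop = x
        rw [Φ_Φ, MulOpposite.unop_op]
      right_inv := fun x => by
        show (Φ k n ((Φ k n x).unop)).unop = x
        rw [Φ_Φ, MulOpposite.unop_op] }, ?_, ?_, ?_⟩
  · intro a b
    simp only [LinearEquiv.coe_mk, LinearMap.coe_mk, AddHom.coe_mk]
    rw [map_mul, MulOpposite.unop_mul]
  · simp only [LinearEquiv.coe_mk, LinearMap.coe_mk, AddHom.coe_mk]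
    rw [map_one, MulOpposite.unop_one]
  · intro A i hi
    simp only [LinearEquiv.coe_mk, LinearMap.coe_mk, AddHom.coe_mk, z]
    rw [Φ_gen, gmap_of_notMem hi, MulOpposite.unop_op]

end QnPaper
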